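/- Let ρ be a density matrix on ℂ^d and let Ψ and Φ be quantum channels on ℂ^d with Kraus operators {L_i}_{i=1}^n and {K_i}_{i=1}^n indexed by the same finite set. Then Q_ρ(Ψ)² + Q_ρ(Φ)² ≥ (1/2) Σ_{i,j} | ⟨[√ρ, L_i], [√ρ, K_i]⟩ · ( ⟨{√ρ, L_j}, {√ρ, K_j}⟩ − 4 · conj(tr(L_j ρ)) · tr(K_j ρ) ) |, where ⟨A, B⟩ = tr(A† B), [A,B] = AB − BA and {A,B} = AB + BA. -/

import Mathlib

open Matrix
open scoped ComplexOrder

noncomputable section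

/-- The positive semidefinite square root of a positive semidefinite matrix
(the definition `Matrix.PosSemidef.sqrt` of the older Mathlib, removed since). -/
def Matrix.PosSemidef.sqrt {n 𝕜 : Type*} [Fintype n] [DecidableEq n] [RCLike 𝕜]
    {A : Matrix n n 𝕜} (hA : A.PosSemidef) : Matrix n n 𝕜 :=
  (hA.1.eigenvectorUnitary : Matrix n n 𝕜) *
    diagonal ((RCLike.ofReal : ℝ → 𝕜) ∘ Real.sqrt ∘ hA.1.eigenvalues) *
    (star hA.1.eigenvectorUnitary : Matrix n n 𝕜)

/-- Variance of an operator `K` with respect to a state `ρ`: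
`V_ρ(K) = ½ tr((K†K + KK†)ρ) − |tr(Kρ)|²`. -/
def opVar {d : ℕ} (ρ K : Matrix (Fin d) (Fin d) ℂ) : ℝ :=
  (((Kᴴ * K + K * Kᴴ) * ρ).trace).re / 2 - ‖(K * ρ).trace‖ ^ 2

/-- Variance of a channel with Kraus operators `K i`: `V_ρ(Φ) = Σ_i V_ρ(K_i)`. -/
def chanVar {d n : ℕ} (ρ : Matrix (Fin d) (Fin d) ℂ)
    (K : Fin n → Matrix (Fin d) (Fin d) ℂ) : ℝ :=
  ∑ i, opVar ρ (K i)

/-- Wigner–Yanase skew information of a channel with Kraus operators `K i`: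
`I_ρ(Φ) = ½ Σ_i ‖[√ρ, K_i]‖_F²`, where `√ρ` is the PSD square root of `ρ`. -/
def chanSkew {d n : ℕ} (ρ : Matrix (Fin d) (Fin d) ℂ) (hρ : ρ.PosSemidef)
    (K : Fin n → Matrix (Fin d) (Fin d) ℂ) : ℝ :=
  (1 / 2) * ∑ i,
    (((hρ.sqrt * K i - K i * hρ.sqrt)ᴴ * (hρ.sqrt * K i - K i * hρ.sqrt)).trace).re

/-- Quantum uncertainty of a channel:
`Q_ρ(Φ) = √(V_ρ(Φ)² − (V_ρ(Φ) − I_ρ(Φ))²)`. -/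
def chanQ {d n : ℕ} (ρ : Matrix (Fin d) (Fin d) ℂ) (hρ : ρ.PosSemidef)
    (K : Fin n → Matrix (Fin d) (Fin d) ℂ) : ℝ :=
  Real.sqrt ((chanVar ρ K) ^ 2 - (chanVar ρ K - chanSkew ρ hρ K) ^ 2)

namespace StmtAux
variable {d : ℕ}

lemma sqrt_herm {ρ : Matrix (Fin d) (Fin d) ℂ} (hρ : ρ.PosSemidef) :
    (hρ.sqrt)ᴴ = hρ.sqrt := by
  unfold Matrix.PosSemidef.sqrt
  simp only [Matrix.conjTranspose_mul, Matrix.diagonal_conjTranspose, Matrix.star_eq_conjTranspose,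
    Matrix.conjTranspose_conjTranspose, Matrix.mul_assoc]
  congr 3
  funext i
  simp
lemma sqrt_mul_self' {ρ : Matrix (Fin d) (Fin d) ℂ} (hρ : ρ.PosSemidef) :
    hρ.sqrt * hρ.sqrt = ρ := by
  unfold Matrix.PosSemidef.sqrt
  conv_rhs => rw [hρ.1.spectral_theorem, Unitary.conjStarAlgAut_apply]
  have hU : (star hρ.1.eigenvectorUnitary : Matrix (Fin d) (Fin d) ℂ) *
      (hρ.1.eigenvectorUnitary : Matrix (Fin d) (Fin d) ℂ) = 1 :=
    Unitary.coe_star_mul_self _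
  calc _ = (hρ.1.eigenvectorUnitary : Matrix (Fin d) (Fin d) ℂ) *
      (diagonal ((RCLike.ofReal : ℝ → ℂ) ∘ Real.sqrt ∘ hρ.1.eigenvalues) *
       ((star hρ.1.eigenvectorUnitary : Matrix (Fin d) (Fin d) ℂ) *
      (hρ.1.eigenvectorUnitary : Matrix (Fin d) (Fin d) ℂ)) *
      diagonal ((RCLike.ofReal : ℝ → ℂ) ∘ Real.sqrt ∘ hρ.1.eigenvalues)) *
      (star hρ.1.eigenvectorUnitary : Matrix (Fin d) (Fin d) ℂ) := by
        simp only [Matrix.mul_assoc]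
    _ = _ := by
      rw [hU, Matrix.mul_one, Matrix.diagonal_mul_diagonal]
      congr 3
      funext i
      simp only [Function.comp_apply]
      rw [← RCLike.ofReal_mul, Real.mul_self_sqrt (hρ.eigenvalues_nonneg i)]
def mvec (A : Matrix (Fin d) (Fin d) ℂ) : EuclideanSpace ℂ (Fin d × Fin d) :=
  WithLp.toLp 2 (fun p => A p.1 p.2)

lemma inner_mvec (A B : Matrix (Fin d) (Fin d) ℂ) :
    (inner ℂ (mvec A) (mvec B) : ℂ) = (Aᴴ * B).trace := by
  simp only [mvec, PiLp.inner_apply, RCLike.inner_apply, Matrix.trace, Matrix.diag,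
    Matrix.mul_apply, Matrix.conjTranspose_apply, Fintype.sum_prod_type]
  rw [Finset.sum_comm]
  simp [mul_comm]

lemma norm_mvec_sq (A : Matrix (Fin d) (Fin d) ℂ) :
    ((Aᴴ * A).trace).re = ‖mvec A‖ ^ 2 := by
  rw [← inner_mvec]
  exact inner_self_eq_norm_sq (𝕜 := ℂ) (mvec A)

lemma trace_key {ρ s : Matrix (Fin d) (Fin d) ℂ} (hsH : sᴴ = s) (hs2 : s * s = ρ)
    (K : Matrix (Fin d) (Fin d) ℂ) :
    ((Kᴴ * K + K * Kᴴ) * ρ).trace * 2 =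
      ((s*K - K*s)ᴴ * (s*K - K*s)).trace + ((s*K + K*s)ᴴ * (s*K + K*s)).trace := by
  have h : (s*K - K*s)ᴴ * (s*K - K*s) + (s*K + K*s)ᴴ * (s*K + K*s)
      = (Kᴴ * (s*s) * K + s * (Kᴴ*K) * s) + (Kᴴ * (s*s) * K + s * (Kᴴ*K) * s) := by
    simp only [Matrix.conjTranspose_sub, Matrix.conjTranspose_add, Matrix.conjTranspose_mul, hsH]
    noncomm_ring
  rw [← Matrix.trace_add, h, hs2, Matrix.trace_add, Matrix.trace_add,
    Matrix.trace_mul_cycle Kᴴ ρ K, Matrix.trace_mul_cycle s (Kᴴ*K) s]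
  rw [show s * s * (Kᴴ * K) = ρ * (Kᴴ * K) from by rw [hs2],
    Matrix.trace_mul_comm ρ (Kᴴ*K), Matrix.add_mul, Matrix.trace_add]
  ring

lemma trace_s_anti {ρ s : Matrix (Fin d) (Fin d) ℂ} (hs2 : s * s = ρ)
    (X : Matrix (Fin d) (Fin d) ℂ) :
    (s * (s * X + X * s)).trace = 2 * (X * ρ).trace := by
  rw [Matrix.mul_add, Matrix.trace_add, ← Matrix.mul_assoc, hs2,
    ← Matrix.mul_assoc, Matrix.trace_mul_cycle s X s, hs2,
    Matrix.trace_mul_comm ρ X]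
  ring

lemma trace_B {ρ s : Matrix (Fin d) (Fin d) ℂ} (hsH : sᴴ = s) (hs2 : s * s = ρ)
    (htr : ρ.trace = 1) (Lm Km : Matrix (Fin d) (Fin d) ℂ) :
    (((s*Lm + Lm*s) - (2*((Lm*ρ).trace)) • s)ᴴ *
       ((s*Km + Km*s) - (2*((Km*ρ).trace)) • s)).trace =
      ((s*Lm + Lm*s)ᴴ * (s*Km + Km*s)).trace
        - 4 * (starRingEnd ℂ) ((Lm*ρ).trace) * ((Km*ρ).trace) := by
  set tL := (Lm*ρ).trace
  set tK := (Km*ρ).trace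
  set P := (s*Lm + Lm*s)ᴴ
  set Q := s*Km + Km*s
  have hPs : (P * s).trace = (starRingEnd ℂ) (2 * tL) := by
    have : P * s = (sᴴ * (s*Lm + Lm*s))ᴴ := by
      simp [P, Matrix.conjTranspose_mul, hsH]
    rw [this, Matrix.trace_conjTranspose, hsH, trace_s_anti hs2 Lm]
    rfl
  have hsQ : (s * Q).trace = 2 * tK := by
    simpa [Q] using trace_s_anti hs2 Km
  have hss : (s * s).trace = 1 := by rw [hs2, htr]
  have hexp : ((P - ((starRingEnd ℂ) (2*tL)) • s) * (Q - (2*tK) • s)).trace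
      = (P*Q).trace - (2*tK) * (P*s).trace - (starRingEnd ℂ) (2*tL) * (s*Q).trace
        + ((starRingEnd ℂ) (2*tL) * (2*tK)) * (s*s).trace := by
    simp only [Matrix.sub_mul, Matrix.mul_sub, Matrix.smul_mul, Matrix.mul_smul,
      Matrix.trace_sub, Matrix.trace_smul, smul_smul, smul_eq_mul]
    ring
  have hc2 : (starRingEnd ℂ) 2 = 2 := map_ofNat (starRingEnd ℂ) 2
  have h2 : (starRingEnd ℂ) (2*tL) = 2 * (starRingEnd ℂ) tL := by
    rw [(starRingEnd ℂ).map_mul, hc2]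
  have hH : ((s*Lm + Lm*s) - (2*tL) • s)ᴴ = P - ((starRingEnd ℂ) (2*tL)) • s := by
    simp [P, Matrix.conjTranspose_sub, Matrix.conjTranspose_smul, hsH, hc2]
  rw [hH, hexp, hPs, hsQ, hss, h2]
  ring

lemma opVar_eq {ρ s : Matrix (Fin d) (Fin d) ℂ} (hsH : sᴴ = s) (hs2 : s * s = ρ)
    (htr : ρ.trace = 1) (X : Matrix (Fin d) (Fin d) ℂ) :
    opVar ρ X = (‖mvec (s*X - X*s)‖^2
      + ‖mvec ((s*X + X*s) - (2*((X*ρ).trace)) • s)‖^2) / 4 := by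
  have hkey := congrArg Complex.re (trace_key hsH hs2 X)
  have hB := congrArg Complex.re (trace_B hsH hs2 htr X X)
  set t := (X*ρ).trace with ht
  have habs : (4 * (starRingEnd ℂ) t * t).re = 4 * ‖t‖ ^ 2 := by
    rw [mul_assoc, mul_comm ((starRingEnd ℂ) t) t, Complex.mul_conj]
    simp [Complex.sq_norm]
  rw [Complex.sub_re, habs, norm_mvec_sq, norm_mvec_sq] at hB
  rw [Complex.add_re, norm_mvec_sq, norm_mvec_sq] at hkey
  have hkey2 : (((Xᴴ * X + X * Xᴴ) * ρ).trace).re * 2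
      = ‖mvec (s*X - X*s)‖^2 + ‖mvec (s*X + X*s)‖^2 := by
    have : ((((Xᴴ * X + X * Xᴴ) * ρ).trace) * 2).re
        = (((Xᴴ * X + X * Xᴴ) * ρ).trace).re * 2 := by
      simp [Complex.mul_re]
    rw [← this]; exact hkey
  unfold opVar
  rw [← ht]
  linarith [hB, hkey2]

lemma chanQ_sq {n : ℕ} (ρ : Matrix (Fin d) (Fin d) ℂ) (hρ : ρ.PosSemidef)
    (htr : ρ.trace = 1) (X : Fin n → Matrix (Fin d) (Fin d) ℂ) :
    chanQ ρ hρ X ^ 2 =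
      (∑ i, ‖mvec (hρ.sqrt * X i - X i * hρ.sqrt)‖^2) *
      (∑ i, ‖mvec ((hρ.sqrt * X i + X i * hρ.sqrt)
          - (2*((X i * ρ).trace)) • hρ.sqrt)‖^2) / 4 := by
  have hsH : (hρ.sqrt)ᴴ = hρ.sqrt := StmtAux.sqrt_herm hρ
  have hs2 : hρ.sqrt * hρ.sqrt = ρ := StmtAux.sqrt_mul_self' hρ
  set C := ∑ i, ‖mvec (hρ.sqrt * X i - X i * hρ.sqrt)‖^2 with hC
  set A := ∑ i, ‖mvec ((hρ.sqrt * X i + X i * hρ.sqrt)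
      - (2*((X i * ρ).trace)) • hρ.sqrt)‖^2 with hA
  have hCn : 0 ≤ C := Finset.sum_nonneg fun i _ => sq_nonneg _
  have hAn : 0 ≤ A := Finset.sum_nonneg fun i _ => sq_nonneg _
  have hskew : chanSkew ρ hρ X = C / 2 := by
    unfold chanSkew
    rw [hC]
    rw [Finset.sum_congr rfl fun i _ => norm_mvec_sq (hρ.sqrt * X i - X i * hρ.sqrt)]
    ring
  have hvar : chanVar ρ X = (C + A) / 4 := by
    unfold chanVar
    rw [Finset.sum_congr rfl fun i _ => opVar_eq hsH hs2 htr (X i), hC, hA,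
      ← Finset.sum_add_distrib]
    rw [Finset.sum_div]
  unfold chanQ
  rw [hvar, hskew]
  rw [Real.sq_sqrt (by nlinarith : (0:ℝ) ≤ ((C+A)/4)^2 - ((C+A)/4 - C/2)^2)]
  ring

end StmtAux

/-- Summation-form uncertainty relation for two quantum channels (Theorem 2). -/
theorem stmt_2 {d n : ℕ}
    (ρ : Matrix (Fin d) (Fin d) ℂ) (hρ : ρ.PosSemidef) (htr : ρ.trace = 1)
    (L : Fin n → Matrix (Fin d) (Fin d) ℂ) (hL : ∑ i, (L i)ᴴ * L i = 1)
    (K : Fin n → Matrix (Fin d) (Fin d) ℂ) (hK : ∑ i, (K i)ᴴ * K i = 1) :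
    chanQ ρ hρ L ^ 2 + chanQ ρ hρ K ^ 2 ≥
      (1 / 2) * ∑ i, ∑ j,
        ‖(((hρ.sqrt * L i - L i * hρ.sqrt)ᴴ * (hρ.sqrt * K i - K i * hρ.sqrt)).trace *
            (((hρ.sqrt * L j + L j * hρ.sqrt)ᴴ * (hρ.sqrt * K j + K j * hρ.sqrt)).trace -
              4 * (starRingEnd ℂ) ((L j * ρ).trace) * ((K j * ρ).trace)))‖ := by
  classical
  have hsH : (hρ.sqrt)ᴴ = hρ.sqrt := StmtAux.sqrt_herm hρ
  have hs2 : hρ.sqrt * hρ.sqrt = ρ := StmtAux.sqrt_mul_self' hρ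
  set s := hρ.sqrt with hsdef
  have hQL := StmtAux.chanQ_sq ρ hρ htr L
  have hQK := StmtAux.chanQ_sq ρ hρ htr K
  rw [← hsdef] at hQL hQK
  set P1 := ∑ i, ‖StmtAux.mvec (s * L i - L i * s)‖ ^ 2 with hP1
  set P2 := ∑ i, ‖StmtAux.mvec (s * K i - K i * s)‖ ^ 2 with hP2
  set P3 := ∑ i, ‖StmtAux.mvec (s * L i + L i * s - (2 * (L i * ρ).trace) • s)‖ ^ 2 with hP3
  set P4 := ∑ i, ‖StmtAux.mvec (s * K i + K i * s - (2 * (K i * ρ).trace) • s)‖ ^ 2 with hP4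
  have hbound : ∀ i j : Fin n,
      ‖(((s * L i - L i * s)ᴴ * (s * K i - K i * s)).trace *
            (((s * L j + L j * s)ᴴ * (s * K j + K j * s)).trace -
              4 * (starRingEnd ℂ) ((L j * ρ).trace) * ((K j * ρ).trace)))‖
        ≤ (‖StmtAux.mvec (s * L i - L i * s)‖ * ‖StmtAux.mvec (s * K i - K i * s)‖) *
            (‖StmtAux.mvec (s * L j + L j * s - (2 * (L j * ρ).trace) • s)‖ *
             ‖StmtAux.mvec (s * K j + K j * s - (2 * (K j * ρ).trace) • s)‖) := by
    intro i j
    have hx : ((s * L i - L i * s)ᴴ * (s * K i - K i * s)).trace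
        = inner ℂ (StmtAux.mvec (s * L i - L i * s)) (StmtAux.mvec (s * K i - K i * s)) :=
      (StmtAux.inner_mvec _ _).symm
    have hy : (((s * L j + L j * s)ᴴ * (s * K j + K j * s)).trace -
          4 * (starRingEnd ℂ) ((L j * ρ).trace) * ((K j * ρ).trace))
        = inner ℂ (StmtAux.mvec ((s * L j + L j * s) - (2*((L j * ρ).trace)) • s))
            (StmtAux.mvec ((s * K j + K j * s) - (2*((K j * ρ).trace)) • s)) := by
      rw [StmtAux.inner_mvec, StmtAux.trace_B hsH hs2 htr (L j) (K j)]
    rw [hx, hy, norm_mul]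
    have h1 := norm_inner_le_norm (𝕜 := ℂ)
      (StmtAux.mvec (s * L i - L i * s)) (StmtAux.mvec (s * K i - K i * s))
    have h2 := norm_inner_le_norm (𝕜 := ℂ)
      (StmtAux.mvec ((s * L j + L j * s) - (2*((L j * ρ).trace)) • s))
      (StmtAux.mvec ((s * K j + K j * s) - (2*((K j * ρ).trace)) • s))
    exact mul_le_mul h1 h2 (norm_nonneg _) (mul_nonneg (norm_nonneg _) (norm_nonneg _))
  set Sx := ∑ i, ‖StmtAux.mvec (s * L i - L i * s)‖ * ‖StmtAux.mvec (s * K i - K i * s)‖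
    with hSx
  set Sy := ∑ i, ‖StmtAux.mvec (s * L i + L i * s - (2 * (L i * ρ).trace) • s)‖ *
      ‖StmtAux.mvec (s * K i + K i * s - (2 * (K i * ρ).trace) • s)‖ with hSy
  have hsum : (1/2 : ℝ) * ∑ i, ∑ j,
      ‖(((s * L i - L i * s)ᴴ * (s * K i - K i * s)).trace *
            (((s * L j + L j * s)ᴴ * (s * K j + K j * s)).trace -
              4 * (starRingEnd ℂ) ((L j * ρ).trace) * ((K j * ρ).trace)))‖
      ≤ (1/2) * (Sx * Sy) := by
    have hle : ∑ i, ∑ j, ‖(((s * L i - L i * s)ᴴ * (s * K i - K i * s)).trace *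
            (((s * L j + L j * s)ᴴ * (s * K j + K j * s)).trace -
              4 * (starRingEnd ℂ) ((L j * ρ).trace) * ((K j * ρ).trace)))‖
        ≤ Sx * Sy := by
      rw [hSx, hSy, Finset.sum_mul_sum]
      exact Finset.sum_le_sum fun i _ => Finset.sum_le_sum fun j _ => hbound i j
    linarith
  have hSx0 : 0 ≤ Sx :=
    Finset.sum_nonneg fun i _ => mul_nonneg (norm_nonneg _) (norm_nonneg _)
  have hSy0 : 0 ≤ Sy :=
    Finset.sum_nonneg fun i _ => mul_nonneg (norm_nonneg _) (norm_nonneg _)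
  have hCS1 : Sx^2 ≤ P1 * P2 := by
    rw [hSx, hP1, hP2]
    exact Finset.sum_mul_sq_le_sq_mul_sq _ _ _
  have hCS2 : Sy^2 ≤ P3 * P4 := by
    rw [hSy, hP3, hP4]
    exact Finset.sum_mul_sq_le_sq_mul_sq _ _ _
  have hP1n : 0 ≤ P1 := Finset.sum_nonneg fun i _ => sq_nonneg _
  have hP2n : 0 ≤ P2 := Finset.sum_nonneg fun i _ => sq_nonneg _
  have hP3n : 0 ≤ P3 := Finset.sum_nonneg fun i _ => sq_nonneg _
  have hP4n : 0 ≤ P4 := Finset.sum_nonneg fun i _ => sq_nonneg _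
  have hfin : Sx * Sy ≤ (P1*P3 + P2*P4)/2 := by
    have h1 : (Sx*Sy)^2 ≤ (P1*P3)*(P2*P4) := by
      calc (Sx*Sy)^2 = Sx^2 * Sy^2 := by ring
        _ ≤ (P1*P2)*(P3*P4) :=
            mul_le_mul hCS1 hCS2 (sq_nonneg _) (mul_nonneg hP1n hP2n)
        _ = (P1*P3)*(P2*P4) := by ring
    have h12 : (Sx*Sy)^2 ≤ ((P1*P3+P2*P4)/2)^2 := by
      nlinarith [sq_nonneg (P1*P3 - P2*P4)]
    calc Sx*Sy = Real.sqrt ((Sx*Sy)^2) := (Real.sqrt_sq (mul_nonneg hSx0 hSy0)).symm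
      _ ≤ Real.sqrt (((P1*P3+P2*P4)/2)^2) := Real.sqrt_le_sqrt h12
      _ = (P1*P3+P2*P4)/2 := Real.sqrt_sq (div_nonneg (add_nonneg (mul_nonneg hP1n hP3n) (mul_nonneg hP2n hP4n)) (by norm_num))
  rw [ge_iff_le, hQL, hQK]
  refine le_trans hsum ?_
  linarith
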